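/- Let V be a vector space over any field k and let D(V) be the Weyl algebra, i.e., the quotient of T(V ⊕ V^*) by the relations [v,w] = 0 for v,w ∈ V, [f,g] = 0 for f,g ∈ V^*, and [f,v] = f(v) for f ∈ V^*, v ∈ V. Then with the filtration deg V = 1, deg V^* = 0, the natural surjection S(V ⊕ V^*) → gr D(V) is an isomorphism. -/

import Mathlib

open TensorProduct

noncomputable section

variable (k : Type) [Field k] (V : Type) [AddCommGroup V] [Module k V]

/-- The tensor algebra on `V ⊕ V^*`. -/
abbrev TVD := TensorAlgebra k (V × Module.Dual k V)

/-- The generator of `T(V ⊕ V^*)` corresponding to `v ∈ V`. -/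
def genV (v : V) : TVD k V := TensorAlgebra.ι k (v, 0)

/-- The generator of `T(V ⊕ V^*)` corresponding to `f ∈ V^*`. -/
def genD (f : Module.Dual k V) : TVD k V := TensorAlgebra.ι k (0, f)

/-- The defining relations of the Weyl algebra `D(V)`:
`[v,w] = 0`, `[f,g] = 0`, `[f,v] = f(v)`. -/
def weylRel : TVD k V → TVD k V → Prop := fun a b =>
  (∃ v w : V, a = genV k V v * genV k V w ∧ b = genV k V w * genV k V v) ∨
  (∃ f g : Module.Dual k V, a = genD k V f * genD k V g ∧ b = genD k V g * genD k V f) ∨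
  (∃ (f : Module.Dual k V) (v : V),
    a = genD k V f * genV k V v ∧
    b = genV k V v * genD k V f + algebraMap k (TVD k V) (f v))

/-- The Weyl algebra `D(V)` of (crystalline) differential operators on `V`. -/
abbrev WeylAlg := RingQuot (weylRel k V)

/-- The defining relations of the symmetric algebra `S(V ⊕ V^*)`. -/
def symRelW : TVD k V → TVD k V → Prop := fun a b =>
  ∃ x y : V × Module.Dual k V,
    a = TensorAlgebra.ι k x * TensorAlgebra.ι k y ∧
    b = TensorAlgebra.ι k y * TensorAlgebra.ι k x

/-- The symmetric algebra `S(V ⊕ V^*)`. -/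
abbrev SymVD := RingQuot (symRelW k V)

/-- The filtration of `T(V ⊕ V^*)` with `deg V = 1`, `deg V^* = 0`: `G n` is the
span of words containing at most `n` letters from `V`. -/
def filtT : ℕ → Submodule k (TVD k V)
  | 0 => Subalgebra.toSubmodule (Algebra.adjoin k (Set.range (genD k V)))
  | (n+1) => filtT n ⊔
      filtT n * (Submodule.span k (Set.range (genV k V)) *
        Subalgebra.toSubmodule (Algebra.adjoin k (Set.range (genD k V))))

/-- The induced filtration on the Weyl algebra `D(V)`. -/
def filtW (n : ℕ) : Submodule k (WeylAlg k V) :=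
  Submodule.map (RingQuot.mkAlgHom k (weylRel k V)).toLinearMap (filtT k V n)

/-- The induced filtration on `S(V ⊕ V^*)` (by degree in `V`). -/
def filtS (n : ℕ) : Submodule k (SymVD k V) :=
  Submodule.map (RingQuot.mkAlgHom k (symRelW k V)).toLinearMap (filtT k V n)

-- auxiliary definitions
------------------------------------------------------------------------------

abbrev mkW : TVD k V →ₐ[k] WeylAlg k V := RingQuot.mkAlgHom k (weylRel k V)
abbrev mkS : TVD k V →ₐ[k] SymVD k V := RingQuot.mkAlgHom k (symRelW k V)
abbrev A0 : Submodule k (TVD k V) :=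
  Subalgebra.toSubmodule (Algebra.adjoin k (Set.range (genD k V)))
abbrev SVm : Submodule k (TVD k V) := Submodule.span k (Set.range (genV k V))

lemma filtT_zero : filtT k V 0 = A0 k V := rfl

lemma filtT_succ (n : ℕ) :
    filtT k V (n+1) = filtT k V n ⊔ filtT k V n * (SVm k V * A0 k V) := rfl

lemma filtT_mono : Monotone (filtT k V) :=
  monotone_nat_of_le_succ fun n => by rw [filtT_succ]; exact le_sup_left

lemma one_mem_A0 : (1 : TVD k V) ∈ A0 k V := one_mem (Algebra.adjoin k _)

lemma genD_mem_A0 (f : Module.Dual k V) : genD k V f ∈ A0 k V :=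
  Algebra.subset_adjoin ⟨f, rfl⟩

lemma genV_mem_SVm (v : V) : genV k V v ∈ SVm k V :=
  Submodule.subset_span ⟨v, rfl⟩

lemma A0_mul_A0 : A0 k V * A0 k V ≤ A0 k V :=
  Submodule.mul_le.2 fun a ha b hb => by
    rw [Subalgebra.mem_toSubmodule] at *
    exact mul_mem ha hb

lemma filtT_mul_A0 (n : ℕ) : filtT k V n * A0 k V ≤ filtT k V n := by
  induction n with
  | zero => exact A0_mul_A0 k V
  | succ n ih =>
    rw [filtT_succ, Submodule.sup_mul]
    apply sup_le
    · exact le_trans ih (le_sup_left)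
    · rw [mul_assoc, mul_assoc]
      refine le_trans ?_ (le_sup_right)
      exact mul_le_mul' le_rfl (mul_le_mul' le_rfl (A0_mul_A0 k V))

lemma filtT_mul (n m : ℕ) : filtT k V n * filtT k V m ≤ filtT k V (n + m) := by
  induction m with
  | zero => exact filtT_mul_A0 k V n
  | succ m ih =>
    rw [filtT_succ, Submodule.mul_sup]
    apply sup_le
    · exact le_trans ih (filtT_mono k V (by omega))
    · rw [← mul_assoc]
      rw [show n + (m+1) = (n + m) + 1 by ring, filtT_succ]
      exact le_trans (mul_le_mul' ih le_rfl) le_sup_right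

lemma genV_mem_filtT1 (v : V) : genV k V v ∈ filtT k V 1 := by
  rw [filtT_succ]
  have : genV k V v = 1 * (genV k V v * 1) := by rw [one_mul, mul_one]
  rw [this]
  exact Submodule.mem_sup_right
    (Submodule.mul_mem_mul (one_mem_A0 k V)
      (Submodule.mul_mem_mul (genV_mem_SVm k V v) (one_mem_A0 k V)))

/-- reusable induction principle for `filtT (n+1)` -/
lemma filtT_succ_induction (n : ℕ) {C : TVD k V → Prop}
    (h0 : ∀ x ∈ filtT k V n, C x)
    (hmul : ∀ a ∈ filtT k V n, ∀ (v : V), ∀ d ∈ A0 k V, C (a * (genV k V v * d)))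
    (hadd : ∀ x y, C x → C y → C (x + y))
    (hsmul : ∀ (c : k) (x), C x → C (c • x)) :
    ∀ x ∈ filtT k V (n+1), C x := by
  intro x hx
  rw [filtT_succ] at hx
  rcases Submodule.mem_sup.1 hx with ⟨y, hy, z, hz, rfl⟩
  refine hadd _ _ (h0 _ hy) ?_
  refine Submodule.mul_induction_on hz ?_ (fun a b ha hb => hadd _ _ ha hb)
  intro a ha w hw
  refine Submodule.mul_induction_on hw ?_ ?_
  · intro s hs d hd
    induction hs using Submodule.span_induction with
    | mem s hsv =>
      obtain ⟨v, rfl⟩ := hsv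
      exact hmul a ha v d hd
    | zero =>
      have : a * (0 * d) = (0 : k) • (a * (genV k V 0 * d)) := by
        simp
      rw [this]; exact hsmul _ _ (hmul a ha 0 d hd)
    | add s t hs ht Cs Ct =>
      have : a * ((s + t) * d) = a * (s * d) + a * (t * d) := by
        rw [add_mul, mul_add]
      rw [this]; exact hadd _ _ Cs Ct
    | smul c s hs Cs =>
      have : a * ((c • s) * d) = c • (a * (s * d)) := by
        rw [smul_mul_assoc, mul_smul_comm]
      rw [this]; exact hsmul _ _ Cs
  · intro w1 w2 hw1 hw2
    have : a * (w1 + w2) = a * w1 + a * w2 := mul_add _ _ _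
    rw [this]; exact hadd _ _ hw1 hw2

------------------------------------------------------------------------------
-- the derivations ∂ᵥ on S(V ⊕ V^*)
------------------------------------------------------------------------------

/-- images of the generators in `SymVD` -/
def sG : (V × Module.Dual k V) →ₗ[k] SymVD k V :=
  (mkS k V).toLinearMap ∘ₗ (TensorAlgebra.ι k)

lemma sG_apply (x : V × Module.Dual k V) :
    sG k V x = mkS k V (TensorAlgebra.ι k x) := rfl

lemma sG_comm (x y : V × Module.Dual k V) :
    sG k V x * sG k V y = sG k V y * sG k V x := by
  have h : mkS k V (TensorAlgebra.ι k x * TensorAlgebra.ι k y)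
      = mkS k V (TensorAlgebra.ι k y * TensorAlgebra.ι k x) :=
    RingQuot.mkAlgHom_rel k ⟨x, y, rfl, rfl⟩
  rw [map_mul, map_mul] at h
  simp only [sG_apply]
  exact h

/-- induction principle for `SymVD` -/
lemma symVD_induction {p : SymVD k V → Prop}
    (halg : ∀ c : k, p (algebraMap k (SymVD k V) c))
    (hgen : ∀ x, p (sG k V x))
    (hadd : ∀ a b, p a → p b → p (a + b))
    (hmul : ∀ a b, p a → p b → p (a * b)) : ∀ a, p a := by
  intro a
  obtain ⟨t, rfl⟩ := RingQuot.mkAlgHom_surjective k (symRelW k V) a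
  induction t using TensorAlgebra.induction with
  | algebraMap c => rw [AlgHom.commutes]; exact halg c
  | ι x => exact hgen x
  | mul a b ha hb => rw [map_mul]; exact hmul _ _ ha hb
  | add a b ha hb => rw [map_add]; exact hadd _ _ ha hb

open TrivSqZeroExt in
/-- generator map for the `ε`-deformation algebra morphism defining `∂ᵥ` -/
def DvGen (v : V) : (V × Module.Dual k V) →ₗ[k] DualNumber (SymVD k V) where
  toFun x := inl (sG k V x) + inr (algebraMap k (SymVD k V) (x.2 v))
  map_add' x y := by
    simp only [map_add, Prod.snd_add, LinearMap.add_apply, inl_add, inr_add]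
    abel
  map_smul' c x := by
    apply TrivSqZeroExt.ext
    · simp only [fst_add, fst_inl, fst_inr, add_zero, map_smul, RingHom.id_apply, fst_smul]
    · simp only [snd_add, snd_inl, snd_inr, zero_add, Prod.smul_snd, LinearMap.smul_apply,
        RingHom.id_apply, snd_smul]
      rw [smul_eq_mul, map_mul, ← Algebra.smul_def]

open TrivSqZeroExt in
lemma DvGen_apply (v : V) (x : V × Module.Dual k V) :
    DvGen k V v x = inl (sG k V x) + inr (algebraMap k (SymVD k V) (x.2 v)) := rfl

open TrivSqZeroExt in
lemma DvGen_rel (v : V) : ∀ ⦃a b : TVD k V⦄, symRelW k V a b →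
    (TensorAlgebra.lift k (DvGen k V v)) a = (TensorAlgebra.lift k (DvGen k V v)) b := by
  rintro a b ⟨x, y, rfl, rfl⟩
  simp only [map_mul, TensorAlgebra.lift_ι_apply, DvGen_apply]
  simp only [add_mul, mul_add, inl_mul_inl, inl_mul_inr, inr_mul_inl, inr_mul_inr,
    smul_eq_mul, op_smul_eq_mul]
  rw [sG_comm, Algebra.commutes (y.2 v) (sG k V x), Algebra.commutes (x.2 v) (sG k V y)]
  abel

/-- the `ε`-deformation map -/
def Dv (v : V) : SymVD k V →ₐ[k] DualNumber (SymVD k V) :=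
  RingQuot.liftAlgHom k ⟨TensorAlgebra.lift k (DvGen k V v), DvGen_rel k V v⟩

lemma Dv_mkS (v : V) (t : TVD k V) :
    Dv k V v (mkS k V t) = TensorAlgebra.lift k (DvGen k V v) t :=
  RingQuot.liftAlgHom_mkAlgHom_apply _ _ _ _

open TrivSqZeroExt in
lemma Dv_sG (v : V) (x : V × Module.Dual k V) :
    Dv k V v (sG k V x) = inl (sG k V x) + inr (algebraMap k (SymVD k V) (x.2 v)) := by
  rw [sG_apply, Dv_mkS, TensorAlgebra.lift_ι_apply, DvGen_apply]
  rfl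

open TrivSqZeroExt in
lemma fst_Dv (v : V) (a : SymVD k V) : (Dv k V v a).fst = a := by
  induction a using symVD_induction k V with
  | halg c => rw [AlgHom.commutes, algebraMap_eq_inl', fst_inl]
  | hgen x => rw [Dv_sG, fst_add, fst_inl, fst_inr, add_zero]
  | hadd a b ha hb => rw [map_add, fst_add, ha, hb]
  | hmul a b ha hb => rw [map_mul, fst_mul, ha, hb]

/-- the derivation `∂ᵥ` on `S(V ⊕ V^*)` -/
def pd (v : V) : SymVD k V →ₗ[k] SymVD k V where
  toFun a := (Dv k V v a).snd
  map_add' a b := by rw [map_add, TrivSqZeroExt.snd_add]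
  map_smul' c a := by rw [map_smul, TrivSqZeroExt.snd_smul]; rfl

lemma pd_mul (v : V) (a b : SymVD k V) :
    pd k V v (a * b) = a * pd k V v b + pd k V v a * b := by
  show (Dv k V v (a*b)).snd = _
  rw [map_mul, TrivSqZeroExt.snd_mul, fst_Dv, fst_Dv]
  rfl

lemma pd_sG (v : V) (x : V × Module.Dual k V) :
    pd k V v (sG k V x) = algebraMap k (SymVD k V) (x.2 v) := by
  show (Dv k V v (sG k V x)).snd = _
  rw [Dv_sG, TrivSqZeroExt.snd_add, TrivSqZeroExt.snd_inl, TrivSqZeroExt.snd_inr, zero_add]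

lemma pd_algebraMap (v : V) (c : k) :
    pd k V v (algebraMap k (SymVD k V) c) = 0 := by
  show (Dv k V v (algebraMap k (SymVD k V) c)).snd = 0
  rw [AlgHom.commutes]
  rfl

lemma pd_one (v : V) : pd k V v 1 = 0 := by
  have := pd_algebraMap k V v 1
  rwa [map_one] at this

lemma pd_add_v (v w : V) (a : SymVD k V) :
    pd k V (v + w) a = pd k V v a + pd k V w a := by
  induction a using symVD_induction k V with
  | halg c => simp [pd_algebraMap]
  | hgen x => simp [pd_sG, map_add]
  | hadd a b ha hb => rw [map_add, map_add, map_add, ha, hb]; abel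
  | hmul a b ha hb =>
    rw [pd_mul, pd_mul, pd_mul, ha, hb, mul_add, add_mul]
    abel

lemma pd_smul_v (c : k) (v : V) (a : SymVD k V) :
    pd k V (c • v) a = c • pd k V v a := by
  induction a using symVD_induction k V with
  | halg c' => simp [pd_algebraMap]
  | hgen x => simp [pd_sG, map_smul, Algebra.smul_def, smul_eq_mul, map_mul]
  | hadd a b ha hb => rw [map_add, map_add, ha, hb, smul_add]
  | hmul a b ha hb =>
    rw [pd_mul, pd_mul, ha, hb, smul_add, mul_smul_comm, smul_mul_assoc]

lemma pd_zero_v (a : SymVD k V) : pd k V 0 a = 0 := by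
  have := pd_smul_v k V 0 0 a
  rwa [zero_smul, zero_smul] at this

lemma pd_comm (v w : V) (a : SymVD k V) :
    pd k V v (pd k V w a) = pd k V w (pd k V v a) := by
  induction a using symVD_induction k V with
  | halg c => simp [pd_algebraMap]
  | hgen x => simp [pd_sG, pd_algebraMap]
  | hadd a b ha hb => simp only [map_add, ha, hb]
  | hmul a b ha hb =>
    simp only [pd_mul, map_add, pd_mul, ha, hb]
    abel
------------------------------------------------------------------------------
-- the action of the Weyl algebra on S(V ⊕ V^*)
------------------------------------------------------------------------------

/-- the generator action: `v` acts by multiplication minus `∂ᵥ`, `f` by multiplication -/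
def rhoS : (V × Module.Dual k V) →ₗ[k] Module.End k (SymVD k V) where
  toFun x := LinearMap.mulLeft k (sG k V x) - pd k V x.1
  map_add' x y := by
    apply LinearMap.ext; intro u
    simp only [map_add, LinearMap.sub_apply, LinearMap.mulLeft_apply, LinearMap.add_apply,
      Prod.fst_add, pd_add_v, add_mul]
    abel
  map_smul' c x := by
    apply LinearMap.ext; intro u
    simp only [map_smul, LinearMap.sub_apply, LinearMap.mulLeft_apply, LinearMap.smul_apply,
      Prod.smul_fst, pd_smul_v, RingHom.id_apply, smul_mul_assoc, smul_sub]

lemma rhoS_apply (x : V × Module.Dual k V) (u : SymVD k V) :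
    rhoS k V x u = sG k V x * u - pd k V x.1 u := rfl

/-- the action of `T(V ⊕ V^*)` on `S(V ⊕ V^*)` -/
def PhiT : TVD k V →ₐ[k] Module.End k (SymVD k V) := TensorAlgebra.lift k (rhoS k V)

lemma PhiT_ι (x : V × Module.Dual k V) : PhiT k V (TensorAlgebra.ι k x) = rhoS k V x :=
  TensorAlgebra.lift_ι_apply _ _

lemma PhiT_genD (f : Module.Dual k V) (u : SymVD k V) :
    PhiT k V (genD k V f) u = sG k V (0, f) * u := by
  rw [genD, PhiT_ι, rhoS_apply, pd_zero_v, sub_zero]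

lemma PhiT_genV (v : V) (u : SymVD k V) :
    PhiT k V (genV k V v) u = sG k V (v, 0) * u - pd k V v u := by
  rw [genV, PhiT_ι, rhoS_apply]

lemma pd_sG_V (v w : V) : pd k V v (sG k V (w, 0)) = 0 := by
  rw [pd_sG]; simp

lemma pd_sG_D (v : V) (f : Module.Dual k V) :
    pd k V v (sG k V (0, f)) = algebraMap k (SymVD k V) (f v) := by
  rw [pd_sG]

lemma PhiT_rel : ∀ ⦃a b : TVD k V⦄, weylRel k V a b → PhiT k V a = PhiT k V b := by
  rintro a b (⟨v, w, rfl, rfl⟩ | ⟨f, g, rfl, rfl⟩ | ⟨f, v, rfl, rfl⟩) <;>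
    apply LinearMap.ext <;> intro u
  · -- [v, w] = 0
    simp only [map_mul, Module.End.mul_apply, PhiT_genV]
    rw [map_sub, map_sub, mul_sub, mul_sub]
    rw [pd_mul, pd_mul, pd_sG_V, pd_sG_V, zero_mul, add_zero, add_zero]
    rw [← mul_assoc, ← mul_assoc, sG_comm k V (v,0) (w,0), pd_comm]
    abel
  · -- [f, g] = 0
    simp only [map_mul, Module.End.mul_apply, PhiT_genD]
    rw [← mul_assoc, ← mul_assoc, sG_comm]
  · -- [f, v] = f(v)
    simp only [map_mul, map_add, Module.End.mul_apply, LinearMap.add_apply, PhiT_genD, PhiT_genV]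
    rw [mul_sub, pd_mul, pd_sG_D]
    have halg : PhiT k V (algebraMap k (TVD k V) (f v)) u = algebraMap k (SymVD k V) (f v) * u := by
      rw [AlgHom.commutes, Module.algebraMap_end_apply, Algebra.smul_def]
    rw [halg]
    rw [← mul_assoc, ← mul_assoc, sG_comm k V (0,f) (v,0)]
    abel
/-- the induced action of the Weyl algebra -/
def PhiW : WeylAlg k V →ₐ[k] Module.End k (SymVD k V) :=
  RingQuot.liftAlgHom k ⟨PhiT k V, PhiT_rel k V⟩

lemma PhiW_mkW (t : TVD k V) : PhiW k V (mkW k V t) = PhiT k V t :=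
  RingQuot.liftAlgHom_mkAlgHom_apply _ _ _ _

------------------------------------------------------------------------------
-- filtration basics on the quotients
------------------------------------------------------------------------------

lemma mkS_mem_filtS {t : TVD k V} {n : ℕ} (h : t ∈ filtT k V n) :
    mkS k V t ∈ filtS k V n := ⟨t, h, rfl⟩

lemma mkW_mem_filtW {t : TVD k V} {n : ℕ} (h : t ∈ filtT k V n) :
    mkW k V t ∈ filtW k V n := ⟨t, h, rfl⟩

lemma filtS_mono : Monotone (filtS k V) := fun n m h =>
  Submodule.map_mono (filtT_mono k V h)

lemma filtW_mono : Monotone (filtW k V) := fun n m h =>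
  Submodule.map_mono (filtT_mono k V h)

lemma filtS_mul {n m : ℕ} {a b : SymVD k V} (ha : a ∈ filtS k V n) (hb : b ∈ filtS k V m) :
    a * b ∈ filtS k V (n + m) := by
  have : filtS k V n * filtS k V m ≤ filtS k V (n + m) := by
    rw [filtS, filtS, filtS, ← Submodule.map_mul]
    exact Submodule.map_mono (filtT_mul k V n m)
  exact this (Submodule.mul_mem_mul ha hb)

lemma filtW_mul {n m : ℕ} {a b : WeylAlg k V} (ha : a ∈ filtW k V n) (hb : b ∈ filtW k V m) :
    a * b ∈ filtW k V (n + m) := by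
  have : filtW k V n * filtW k V m ≤ filtW k V (n + m) := by
    rw [filtW, filtW, filtW, ← Submodule.map_mul]
    exact Submodule.map_mono (filtT_mul k V n m)
  exact this (Submodule.mul_mem_mul ha hb)

lemma one_mem_filtS0 : (1 : SymVD k V) ∈ filtS k V 0 := by
  have := mkS_mem_filtS k V (n := 0) (one_mem_A0 k V)
  rwa [map_one] at this

lemma one_mem_filtW0 : (1 : WeylAlg k V) ∈ filtW k V 0 := by
  have := mkW_mem_filtW k V (n := 0) (one_mem_A0 k V)
  rwa [map_one] at this

lemma algebraMap_mem_filtS0 (c : k) : algebraMap k (SymVD k V) c ∈ filtS k V 0 := by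
  rw [Algebra.algebraMap_eq_smul_one]
  exact Submodule.smul_mem _ _ (one_mem_filtS0 k V)

lemma algebraMap_mem_filtW0 (c : k) : algebraMap k (WeylAlg k V) c ∈ filtW k V 0 := by
  rw [Algebra.algebraMap_eq_smul_one]
  exact Submodule.smul_mem _ _ (one_mem_filtW0 k V)

lemma sGV_mem_filtS1 (v : V) : sG k V (v, 0) ∈ filtS k V 1 :=
  mkS_mem_filtS k V (genV_mem_filtT1 k V v)

------------------------------------------------------------------------------
-- the action respects the filtration
------------------------------------------------------------------------------

/-- on degree-0 elements `PhiT` is just multiplication -/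
lemma PhiT_A0 {t : TVD k V} (ht : t ∈ A0 k V) :
    PhiT k V t = LinearMap.mulLeft k (mkS k V t) := by
  rw [Subalgebra.mem_toSubmodule] at ht
  induction ht using Algebra.adjoin_induction with
  | mem x hx =>
    obtain ⟨f, rfl⟩ := hx
    apply LinearMap.ext; intro u
    rw [PhiT_genD, LinearMap.mulLeft_apply, sG_apply]
    rfl
  | algebraMap c =>
    apply LinearMap.ext; intro u
    rw [AlgHom.commutes, AlgHom.commutes, Module.algebraMap_end_apply,
      LinearMap.mulLeft_apply, Algebra.smul_def]
  | add a b ha hb hA hB => rw [map_add, map_add, hA, hB]; ext u; simp [add_mul]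
  | mul a b ha hb hA hB =>
    rw [map_mul, map_mul, hA, hB, LinearMap.mulLeft_mul]
    rfl

/-- `∂ᵥ` preserves the filtration on `S(V ⊕ V^*)`, degree-0 case -/
lemma pd_filtS0 (v : V) : ∀ t ∈ A0 k V, pd k V v (mkS k V t) ∈ filtS k V 0 := by
  intro t ht
  rw [Subalgebra.mem_toSubmodule] at ht
  induction ht using Algebra.adjoin_induction with
  | mem x hx =>
    obtain ⟨f, rfl⟩ := hx
    rw [show mkS k V (genD k V f) = sG k V (0, f) from rfl, pd_sG_D]
    exact algebraMap_mem_filtS0 k V _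
  | algebraMap c => rw [AlgHom.commutes, pd_algebraMap]; exact zero_mem _
  | add a b ha hb hA hB => rw [map_add, map_add]; exact add_mem hA hB
  | mul a b ha hb hA hB =>
    rw [map_mul, pd_mul]
    have h1 : mkS k V a ∈ filtS k V 0 :=
      mkS_mem_filtS k V (by rwa [filtT_zero, Subalgebra.mem_toSubmodule])
    have h2 : mkS k V b ∈ filtS k V 0 :=
      mkS_mem_filtS k V (by rwa [filtT_zero, Subalgebra.mem_toSubmodule])
    exact add_mem (by simpa using filtS_mul k V h1 hB) (by simpa using filtS_mul k V hA h2)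

/-- `∂ᵥ` preserves the filtration on `S(V ⊕ V^*)` -/
lemma pd_filtS (v : V) : ∀ (n : ℕ), ∀ t ∈ filtT k V n, pd k V v (mkS k V t) ∈ filtS k V n := by
  intro n
  induction n with
  | zero => exact pd_filtS0 k V v
  | succ n ih =>
    refine filtT_succ_induction k V n
      (C := fun t => pd k V v (mkS k V t) ∈ filtS k V (n+1)) ?_ ?_ ?_ ?_
    · intro t ht
      exact filtS_mono k V (Nat.le_succ n) (ih t ht)
    · intro a ha w d hd
      rw [map_mul, pd_mul, map_mul, pd_mul]
      rw [show mkS k V (genV k V w) = sG k V (w, 0) from rfl, pd_sG_V, zero_mul, add_zero]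
      have hma : mkS k V a ∈ filtS k V n := mkS_mem_filtS k V ha
      have hpa : pd k V v (mkS k V a) ∈ filtS k V n := ih a ha
      have hmd : mkS k V d ∈ filtS k V 0 := mkS_mem_filtS k V hd
      have hpd : pd k V v (mkS k V d) ∈ filtS k V 0 := pd_filtS0 k V v d hd
      have hY : sG k V (w, 0) ∈ filtS k V 1 := sGV_mem_filtS1 k V w
      refine add_mem ?_ ?_
      · have : sG k V (w, 0) * pd k V v (mkS k V d) ∈ filtS k V 1 := by
          simpa using filtS_mul k V hY hpd
        simpa using filtS_mul k V hma this
      · have : sG k V (w, 0) * mkS k V d ∈ filtS k V 1 := by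
          simpa using filtS_mul k V hY hmd
        simpa using filtS_mul k V hpa this
    · intro x y hx hy
      rw [map_add, map_add]; exact add_mem hx hy
    · intro c x hx
      rw [map_smul, map_smul]; exact Submodule.smul_mem _ _ hx

/-- every element of `filtS m` has the derivative in `filtS m` -/
lemma pd_filtS' (v : V) {m : ℕ} {u : SymVD k V} (hu : u ∈ filtS k V m) :
    pd k V v u ∈ filtS k V m := by
  obtain ⟨t, ht, rfl⟩ := hu
  exact pd_filtS k V v m t ht
/-- key estimate: the action of `filtT n` agrees with multiplication by the symbol
up to terms of lower `V`-degree -/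
lemma W1 : ∀ (n : ℕ), ∀ t ∈ filtT k V n, ∀ (m : ℕ), ∀ u ∈ filtS k V m,
    PhiT k V t u - mkS k V t * u ∈ filtS k V (n + m - 1) := by
  intro n
  induction n with
  | zero =>
    intro t ht m u hu
    rw [PhiT_A0 k V (by rwa [filtT_zero] at ht), LinearMap.mulLeft_apply, sub_self]
    exact zero_mem _
  | succ n ih =>
    refine filtT_succ_induction k V n
      (C := fun t => ∀ (m : ℕ), ∀ u ∈ filtS k V m,
        PhiT k V t u - mkS k V t * u ∈ filtS k V (n + 1 + m - 1)) ?_ ?_ ?_ ?_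
    · intro t ht m u hu
      have := ih t ht m u hu
      exact filtS_mono k V (by omega) this
    · intro a ha w d hd m u hu
      have key : n + 1 + m - 1 = n + m := by omega
      rw [key]
      -- expand the action
      rw [map_mul, map_mul, Module.End.mul_apply, Module.End.mul_apply]
      rw [PhiT_A0 k V hd, LinearMap.mulLeft_apply, PhiT_genV]
      -- the two pieces
      have hdu : mkS k V d * u ∈ filtS k V m := by
        simpa using filtS_mul k V (mkS_mem_filtS k V (n := 0) hd) hu
      have hu1 : sG k V (w, 0) * (mkS k V d * u) ∈ filtS k V (m + 1) := by
        simpa [Nat.add_comm] using filtS_mul k V (sGV_mem_filtS1 k V w) hdu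
      have hu2 : pd k V w (mkS k V d * u) ∈ filtS k V m := pd_filtS' k V w hdu
      rw [map_sub]
      have hmain : PhiT k V a (sG k V (w, 0) * (mkS k V d * u))
          - mkS k V a * (sG k V (w, 0) * (mkS k V d * u)) ∈ filtS k V (n + m) := by
        have := ih a ha (m + 1) _ hu1
        exact filtS_mono k V (by omega) this
      have herr : PhiT k V a (pd k V w (mkS k V d * u)) ∈ filtS k V (n + m) := by
        have h1 := ih a ha m _ hu2
        have h2 : mkS k V a * pd k V w (mkS k V d * u) ∈ filtS k V (n + m) :=
          filtS_mul k V (mkS_mem_filtS k V ha) hu2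
        have h1' := filtS_mono k V (show n + m - 1 ≤ n + m by omega) h1
        have := add_mem h1' h2
        rwa [sub_add_cancel] at this
      have hgoal : PhiT k V a (sG k V (w, 0) * (mkS k V d * u))
            - PhiT k V a (pd k V w (mkS k V d * u))
            - mkS k V (a * (genV k V w * d)) * u
          = (PhiT k V a (sG k V (w, 0) * (mkS k V d * u))
            - mkS k V a * (sG k V (w, 0) * (mkS k V d * u)))
            - PhiT k V a (pd k V w (mkS k V d * u)) := by
        have hexp : mkS k V (a * (genV k V w * d))
            = mkS k V a * (sG k V (w, 0) * mkS k V d) := by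
          rw [map_mul, map_mul]; rfl
        rw [hexp, mul_assoc, mul_assoc]
        abel
      rw [hgoal]
      exact sub_mem hmain herr
    · intro x y hx hy m u hu
      have h := add_mem (hx m u hu) (hy m u hu)
      rw [map_add, map_add, LinearMap.add_apply, add_mul]
      convert h using 1
      abel
    · intro c x hx m u hu
      have h := Submodule.smul_mem _ c (hx m u hu)
      rw [map_smul, map_smul, LinearMap.smul_apply, smul_mul_assoc, ← smul_sub]
      exact h

/-- consequence: for `t` of filtration degree `n+1` the "normal-ordering defect" has degree `n` -/
lemma C1 {n : ℕ} {t : TVD k V} (ht : t ∈ filtT k V (n + 1)) :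
    PhiT k V t 1 - mkS k V t ∈ filtS k V n := by
  have := W1 k V (n+1) t ht 0 1 (one_mem_filtS0 k V)
  simpa using this
------------------------------------------------------------------------------
-- the action of S(V ⊕ V^*) on the Weyl algebra by left/right multiplications
------------------------------------------------------------------------------

lemma wk_vv (v w : V) : mkW k V (genV k V v) * mkW k V (genV k V w)
    = mkW k V (genV k V w) * mkW k V (genV k V v) := by
  have hrel : weylRel k V (genV k V v * genV k V w) (genV k V w * genV k V v) :=
    Or.inl ⟨v, w, rfl, rfl⟩
  have h := RingQuot.mkAlgHom_rel (s := weylRel k V) k hrel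
  rwa [map_mul, map_mul] at h

lemma wk_ff (f g : Module.Dual k V) : mkW k V (genD k V f) * mkW k V (genD k V g)
    = mkW k V (genD k V g) * mkW k V (genD k V f) := by
  have hrel : weylRel k V (genD k V f * genD k V g) (genD k V g * genD k V f) :=
    Or.inr (Or.inl ⟨f, g, rfl, rfl⟩)
  have h := RingQuot.mkAlgHom_rel (s := weylRel k V) k hrel
  rwa [map_mul, map_mul] at h

lemma wk_fv (f : Module.Dual k V) (v : V) :
    mkW k V (genD k V f) * mkW k V (genV k V v)
    = mkW k V (genV k V v) * mkW k V (genD k V f) + algebraMap k (WeylAlg k V) (f v) := by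
  have hrel : weylRel k V (genD k V f * genV k V v)
      (genV k V v * genD k V f + algebraMap k (TVD k V) (f v)) :=
    Or.inr (Or.inr ⟨f, v, rfl, rfl⟩)
  have h := RingQuot.mkAlgHom_rel (s := weylRel k V) k hrel
  rwa [map_mul, map_add, map_mul, AlgHom.commutes] at h

lemma genV_zero : genV k V 0 = 0 := by
  rw [genV, show ((0 : V), (0 : Module.Dual k V)) = 0 from rfl, map_zero]

lemma genD_zero : genD k V 0 = 0 := by
  rw [genD, show ((0 : V), (0 : Module.Dual k V)) = 0 from rfl, map_zero]

/-- generator action: `v` acts by left multiplication, `f` by right multiplication -/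
def rhoW : (V × Module.Dual k V) →ₗ[k] Module.End k (WeylAlg k V) where
  toFun x := LinearMap.mulLeft k (mkW k V (genV k V x.1))
    + LinearMap.mulRight k (mkW k V (genD k V x.2))
  map_add' x y := by
    apply LinearMap.ext; intro u
    have h1 : genV k V (x + y).1 = genV k V x.1 + genV k V y.1 := by
      rw [genV, genV, genV, Prod.fst_add, show ((x.1 + y.1 : V), (0 : Module.Dual k V))
        = (x.1, (0:Module.Dual k V)) + (y.1, (0:Module.Dual k V)) by simp, map_add]
    have h2 : genD k V (x + y).2 = genD k V x.2 + genD k V y.2 := by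
      rw [genD, genD, genD, Prod.snd_add, show ((0 : V), x.2 + y.2)
        = ((0:V), x.2) + ((0:V), y.2) by simp, map_add]
    simp only [LinearMap.add_apply, LinearMap.mulLeft_apply, LinearMap.mulRight_apply,
      h1, h2, map_add, add_mul, mul_add]
    abel
  map_smul' c x := by
    apply LinearMap.ext; intro u
    have h1 : genV k V (c • x).1 = c • genV k V x.1 := by
      rw [genV, genV, Prod.smul_fst, show ((c • x.1 : V), (0 : Module.Dual k V))
        = c • (x.1, (0:Module.Dual k V)) by simp, map_smul]
    have h2 : genD k V (c • x).2 = c • genD k V x.2 := by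
      rw [genD, genD, Prod.smul_snd, show ((0 : V), c • x.2)
        = c • ((0:V), x.2) by simp, map_smul]
    simp only [LinearMap.add_apply, LinearMap.mulLeft_apply, LinearMap.mulRight_apply,
      h1, h2, map_smul, RingHom.id_apply, LinearMap.smul_apply, smul_add,
      smul_mul_assoc, mul_smul_comm]

lemma rhoW_apply (x : V × Module.Dual k V) (u : WeylAlg k V) :
    rhoW k V x u = mkW k V (genV k V x.1) * u + u * mkW k V (genD k V x.2) := rfl

/-- the action of `T(V ⊕ V^*)` on the Weyl algebra -/
def PsiT : TVD k V →ₐ[k] Module.End k (WeylAlg k V) := TensorAlgebra.lift k (rhoW k V)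

lemma PsiT_ι (x : V × Module.Dual k V) : PsiT k V (TensorAlgebra.ι k x) = rhoW k V x :=
  TensorAlgebra.lift_ι_apply _ _

lemma PsiT_genV (v : V) (u : WeylAlg k V) :
    PsiT k V (genV k V v) u = mkW k V (genV k V v) * u := by
  rw [genV, PsiT_ι]
  show mkW k V (genV k V v) * u + u * mkW k V (genD k V 0) = _
  rw [genD_zero, map_zero, mul_zero, add_zero]
  rfl

lemma PsiT_genD (f : Module.Dual k V) (u : WeylAlg k V) :
    PsiT k V (genD k V f) u = u * mkW k V (genD k V f) := by
  rw [genD, PsiT_ι]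
  show mkW k V (genV k V 0) * u + u * mkW k V (genD k V f) = _
  rw [genV_zero, map_zero, zero_mul, zero_add]
  rfl

lemma PsiT_rel : ∀ ⦃a b : TVD k V⦄, symRelW k V a b → PsiT k V a = PsiT k V b := by
  rintro a b ⟨x, y, rfl, rfl⟩
  apply LinearMap.ext; intro u
  simp only [map_mul, Module.End.mul_apply, PsiT_ι, rhoW_apply]
  simp only [mul_add, add_mul, ← mul_assoc]
  rw [wk_vv k V x.1 y.1]
  rw [mul_assoc u (mkW k V (genD k V y.2)) (mkW k V (genD k V x.2)), wk_ff k V y.2 x.2,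
    ← mul_assoc]
  abel

/-- the induced action of `S(V ⊕ V^*)` on the Weyl algebra -/
def PsiS : SymVD k V →ₐ[k] Module.End k (WeylAlg k V) :=
  RingQuot.liftAlgHom k ⟨PsiT k V, PsiT_rel k V⟩

lemma PsiS_mkS (t : TVD k V) : PsiS k V (mkS k V t) = PsiT k V t :=
  RingQuot.liftAlgHom_mkAlgHom_apply _ _ _ _
------------------------------------------------------------------------------
-- commutator estimates in the Weyl algebra
------------------------------------------------------------------------------

/-- degree-0 elements commute with degree-0 elements in `D(V)` -/
lemma LComm0 : ∀ t ∈ A0 k V, ∀ a ∈ A0 k V, mkW k V t * mkW k V a = mkW k V a * mkW k V t := by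
  intro t ht
  rw [Subalgebra.mem_toSubmodule] at ht
  -- first: commuting with a single generator
  have hgen : ∀ s ∈ A0 k V, ∀ (f : Module.Dual k V),
      mkW k V s * mkW k V (genD k V f) = mkW k V (genD k V f) * mkW k V s := by
    intro s hs f
    rw [Subalgebra.mem_toSubmodule] at hs
    induction hs using Algebra.adjoin_induction with
    | mem x hx => obtain ⟨g, rfl⟩ := hx; exact wk_ff k V g f
    | algebraMap c => rw [AlgHom.commutes, Algebra.commutes]
    | add a b ha hb hA hB => rw [map_add, add_mul, mul_add, hA, hB]
    | mul a b ha hb hA hB =>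
      rw [map_mul, mul_assoc, hB, ← mul_assoc, hA, mul_assoc]
  intro a ha
  rw [Subalgebra.mem_toSubmodule] at ha
  induction ha using Algebra.adjoin_induction with
  | mem x hx =>
    obtain ⟨f, rfl⟩ := hx
    exact hgen t (by rwa [Subalgebra.mem_toSubmodule]) f
  | algebraMap c => rw [AlgHom.commutes, Algebra.commutes]
  | add a b ha hb hA hB => rw [map_add, add_mul, mul_add, hA, hB]
  | mul a b ha hb hA hB =>
    rw [map_mul, ← mul_assoc, hA, mul_assoc, hB, ← mul_assoc]

/-- commutator of a filtered element with a degree-0 generator drops degree -/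
lemma LCf (f : Module.Dual k V) : ∀ (m : ℕ), ∀ t ∈ filtT k V (m + 1),
    mkW k V t * mkW k V (genD k V f) - mkW k V (genD k V f) * mkW k V t ∈ filtW k V m := by
  -- commutator with `genV v * d` is in `filtW 0`
  have hvd : ∀ (v : V), ∀ d ∈ A0 k V,
      mkW k V (genV k V v * d) * mkW k V (genD k V f)
        - mkW k V (genD k V f) * mkW k V (genV k V v * d) ∈ filtW k V 0 := by
    intro v d hd
    have hcd : mkW k V d * mkW k V (genD k V f) = mkW k V (genD k V f) * mkW k V d :=
      LComm0 k V d hd _ (genD_mem_A0 k V f)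
    have hcv := wk_fv k V f v
    -- wv * wd * wf - wf * wv * wd = wv*wf*wd - wf*wv*wd = -(algebraMap (f v)) * wd
    have : mkW k V (genV k V v * d) * mkW k V (genD k V f)
        - mkW k V (genD k V f) * mkW k V (genV k V v * d)
        = -(algebraMap k (WeylAlg k V) (f v) * mkW k V d) := by
      rw [map_mul, mul_assoc, hcd, ← mul_assoc, ← mul_assoc, hcv, add_mul]
      abel
    rw [this]
    exact neg_mem (filtW_mul k V (n := 0) (m := 0) (algebraMap_mem_filtW0 k V _)
      (mkW_mem_filtW k V (n := 0) hd))
  intro m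
  induction m with
  | zero =>
    refine filtT_succ_induction k V 0
      (C := fun t => mkW k V t * mkW k V (genD k V f)
        - mkW k V (genD k V f) * mkW k V t ∈ filtW k V 0) ?_ ?_ ?_ ?_
    · intro t ht
      rw [LComm0 k V t ht _ (genD_mem_A0 k V f), sub_self]
      exact zero_mem _
    · intro a ha v d hd
      have hca : mkW k V a * mkW k V (genD k V f) = mkW k V (genD k V f) * mkW k V a :=
        LComm0 k V a ha _ (genD_mem_A0 k V f)
      have key : mkW k V (a * (genV k V v * d)) * mkW k V (genD k V f)
          - mkW k V (genD k V f) * mkW k V (a * (genV k V v * d))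
          = mkW k V a * (mkW k V (genV k V v * d) * mkW k V (genD k V f)
            - mkW k V (genD k V f) * mkW k V (genV k V v * d)) := by
        simp only [map_mul, mul_sub, mul_assoc]
        rw [← mul_assoc (mkW k V a) (mkW k V (genD k V f)), hca,
          mul_assoc (mkW k V (genD k V f))]
      rw [key]
      have := filtW_mul k V (n := 0) (m := 0) (mkW_mem_filtW k V (n := 0) ha) (hvd v d hd)
      simpa using this
    · intro x y hx hy
      have := add_mem hx hy
      rw [map_add, add_mul, mul_add]
      convert this using 1
      abel
    · intro c x hx
      have h := Submodule.smul_mem _ c hx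
      rw [smul_sub] at h
      rw [map_smul, smul_mul_assoc, mul_smul_comm]
      exact h
  | succ m ih =>
    refine filtT_succ_induction k V (m + 1)
      (C := fun t => mkW k V t * mkW k V (genD k V f)
        - mkW k V (genD k V f) * mkW k V t ∈ filtW k V (m + 1)) ?_ ?_ ?_ ?_
    · intro t ht
      exact filtW_mono k V (by omega) (ih t ht)
    · intro a ha v d hd
      -- comm(a * vd) = wa * comm(vd) + comm(a) * w(vd)
      have key : mkW k V (a * (genV k V v * d)) * mkW k V (genD k V f)
          - mkW k V (genD k V f) * mkW k V (a * (genV k V v * d))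
          = mkW k V a * (mkW k V (genV k V v * d) * mkW k V (genD k V f)
              - mkW k V (genD k V f) * mkW k V (genV k V v * d))
            + (mkW k V a * mkW k V (genD k V f)
              - mkW k V (genD k V f) * mkW k V a) * mkW k V (genV k V v * d) := by
        simp only [map_mul, mul_sub, sub_mul, mul_assoc]
        abel
      rw [key]
      refine add_mem ?_ ?_
      · have := filtW_mul k V (mkW_mem_filtW k V ha) (hvd v d hd)
        exact filtW_mono k V (by omega) this
      · have hvd1 : genV k V v * d ∈ filtT k V 1 := by
          rw [filtT_succ]
          refine Submodule.mem_sup_right ?_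
          have : genV k V v * d = 1 * (genV k V v * d) := by rw [one_mul]
          rw [this]
          exact Submodule.mul_mem_mul (one_mem_A0 k V)
            (Submodule.mul_mem_mul (genV_mem_SVm k V v) hd)
        have := filtW_mul k V (ih a ha) (mkW_mem_filtW k V hvd1)
        exact filtW_mono k V (by omega) this
    · intro x y hx hy
      have := add_mem hx hy
      rw [map_add, add_mul, mul_add]
      convert this using 1
      abel
    · intro c x hx
      have h := Submodule.smul_mem _ c hx
      rw [smul_sub] at h
      rw [map_smul, smul_mul_assoc, mul_smul_comm]
      exact h

/-- commutator of a filtered element with any degree-0 element drops degree -/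
lemma LCA : ∀ a ∈ A0 k V, ∀ (m : ℕ), ∀ t ∈ filtT k V (m + 1),
    mkW k V t * mkW k V a - mkW k V a * mkW k V t ∈ filtW k V m := by
  intro a ha
  rw [Subalgebra.mem_toSubmodule] at ha
  induction ha using Algebra.adjoin_induction with
  | mem x hx =>
    obtain ⟨f, rfl⟩ := hx
    exact LCf k V f
  | algebraMap c =>
    intro m t ht
    rw [AlgHom.commutes, Algebra.commutes, sub_self]
    exact zero_mem _
  | add a b ha hb hA hB =>
    intro m t ht
    have := add_mem (hA m t ht) (hB m t ht)
    rw [map_add, mul_add, add_mul]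
    convert this using 1
    abel
  | mul a b ha hb hA hB =>
    intro m t ht
    have hwa : mkW k V a ∈ filtW k V 0 :=
      mkW_mem_filtW k V (n := 0) ((Subalgebra.mem_toSubmodule _).2 ha)
    have hwb : mkW k V b ∈ filtW k V 0 :=
      mkW_mem_filtW k V (n := 0) ((Subalgebra.mem_toSubmodule _).2 hb)
    have key : mkW k V t * mkW k V (a * b) - mkW k V (a * b) * mkW k V t
        = (mkW k V t * mkW k V a - mkW k V a * mkW k V t) * mkW k V b
          + mkW k V a * (mkW k V t * mkW k V b - mkW k V b * mkW k V t) := by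
      simp only [map_mul, sub_mul, mul_sub, mul_assoc]
      abel
    rw [key]
    refine add_mem ?_ ?_
    · have := filtW_mul k V (hA m t ht) hwb
      simpa using this
    · have := filtW_mul k V hwa (hB m t ht)
      simpa using this
/-- on degree-0 elements `PsiT` is right multiplication -/
lemma PsiT_A0 {t : TVD k V} (ht : t ∈ A0 k V) :
    PsiT k V t = LinearMap.mulRight k (mkW k V t) := by
  rw [Subalgebra.mem_toSubmodule] at ht
  induction ht using Algebra.adjoin_induction with
  | mem x hx =>
    obtain ⟨f, rfl⟩ := hx
    apply LinearMap.ext; intro u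
    rw [PsiT_genD, LinearMap.mulRight_apply]
  | algebraMap c =>
    apply LinearMap.ext; intro u
    rw [AlgHom.commutes, AlgHom.commutes, Module.algebraMap_end_apply,
      LinearMap.mulRight_apply, ← Algebra.commutes, ← Algebra.smul_def]
  | add a b ha hb hA hB =>
    rw [map_add, map_add, hA, hB]
    apply LinearMap.ext; intro u
    simp [mul_add]
  | mul a b ha hb hA hB =>
    rw [map_mul, map_mul, hA, hB]
    apply LinearMap.ext; intro u
    simp only [Module.End.mul_apply, LinearMap.mulRight_apply]
    rw [mul_assoc, LComm0 k V b ((Subalgebra.mem_toSubmodule _).2 hb)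
      a ((Subalgebra.mem_toSubmodule _).2 ha)]

/-- key estimate on the Weyl side -/
lemma W2 : ∀ (n : ℕ), ∀ t ∈ filtT k V n, ∀ (m : ℕ), ∀ u ∈ filtW k V m,
    PsiT k V t u - mkW k V t * u ∈ filtW k V (n + m - 1) := by
  intro n
  induction n with
  | zero =>
    intro t ht m u hu
    rw [PsiT_A0 k V (by rwa [filtT_zero] at ht), LinearMap.mulRight_apply]
    obtain ⟨s, hs, rfl⟩ := hu
    show mkW k V s * mkW k V t - mkW k V t * mkW k V s ∈ _
    cases m with
    | zero =>
      rw [LComm0 k V s hs t (by rwa [filtT_zero] at ht), sub_self]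
      exact zero_mem _
    | succ m' =>
      have := LCA k V t (by rwa [filtT_zero] at ht) m' s hs
      exact filtW_mono k V (by omega) this
  | succ n ih =>
    refine filtT_succ_induction k V n
      (C := fun t => ∀ (m : ℕ), ∀ u ∈ filtW k V m,
        PsiT k V t u - mkW k V t * u ∈ filtW k V (n + 1 + m - 1)) ?_ ?_ ?_ ?_
    · intro t ht m u hu
      exact filtW_mono k V (by omega) (ih t ht m u hu)
    · intro a ha v d hd m u hu
      have key : n + 1 + m - 1 = n + m := by omega
      rw [key]
      have hwv : mkW k V (genV k V v) ∈ filtW k V 1 :=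
        mkW_mem_filtW k V (genV_mem_filtT1 k V v)
      have hwd : mkW k V d ∈ filtW k V 0 := mkW_mem_filtW k V (n := 0) hd
      -- expand the action
      rw [map_mul, map_mul, Module.End.mul_apply, Module.End.mul_apply,
        PsiT_A0 k V hd, LinearMap.mulRight_apply, PsiT_genV]
      obtain ⟨s, hs, rfl⟩ := hu
      rw [show (RingQuot.mkAlgHom k (weylRel k V)).toLinearMap s = mkW k V s from rfl]
      set u := mkW k V s with hu_def
      have hu0 : u ∈ filtW k V m := mkW_mem_filtW k V hs
      have hX : mkW k V (genV k V v) * (mkW k V d * u) ∈ filtW k V (m + 1) := by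
        have := filtW_mul k V hwv (filtW_mul k V hwd hu0)
        simpa [Nat.add_comm] using this
      have hassoc : mkW k V a * (mkW k V (genV k V v) * (mkW k V d * u))
          = mkW k V (a * (genV k V v * d)) * u := by
        rw [map_mul, map_mul, mul_assoc, mul_assoc]
      cases m with
      | zero =>
        have hcomm : u * mkW k V d = mkW k V d * u :=
          LComm0 k V s hs d hd
        rw [hcomm]
        have hIH := ih a ha 1 _ hX
        rw [show n + 1 - 1 = n by omega] at hIH
        rw [show n + 0 = n by omega]
        rw [← hassoc]
        exact hIH
      | succ m' =>
        have hE : u * mkW k V d - mkW k V d * u ∈ filtW k V m' := LCA k V d hd m' s hs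
        have hsplit : mkW k V (genV k V v) * (u * mkW k V d)
            = mkW k V (genV k V v) * (mkW k V d * u)
              + mkW k V (genV k V v) * (u * mkW k V d - mkW k V d * u) := by
          rw [← mul_add]
          congr 1
          abel
        rw [hsplit]
        set X := mkW k V (genV k V v) * (mkW k V d * u) with hXdef
        set E := mkW k V (genV k V v) * (u * mkW k V d - mkW k V d * u) with hEdef
        have hEm : E ∈ filtW k V (m' + 1) := by
          have := filtW_mul k V hwv hE
          simpa [Nat.add_comm] using this
        have hXE : X + E ∈ filtW k V (m' + 1 + 1) :=
          add_mem (filtW_mono k V (by omega) hX) (filtW_mono k V (by omega) hEm)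
        have hIH := ih a ha (m' + 1 + 1) _ hXE
        rw [show n + (m' + 1 + 1) - 1 = n + (m' + 1) by omega] at hIH
        have haE : mkW k V a * E ∈ filtW k V (n + (m' + 1)) := by
          have := filtW_mul k V (mkW_mem_filtW k V ha) hEm
          simpa [Nat.add_comm] using this
        have hfinal : PsiT k V a (X + E) - mkW k V (a * (genV k V v * d)) * u
            = (PsiT k V a (X + E) - mkW k V a * (X + E)) + mkW k V a * E := by
          rw [← hassoc, mul_add]
          abel
        rw [hfinal]
        exact add_mem hIH haE
    · intro x y hx hy m u hu
      have h := add_mem (hx m u hu) (hy m u hu)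
      rw [map_add, map_add, LinearMap.add_apply, add_mul]
      convert h using 1
      abel
    · intro c x hx m u hu
      have h := Submodule.smul_mem _ c (hx m u hu)
      rw [smul_sub] at h
      rw [map_smul, map_smul, LinearMap.smul_apply, smul_mul_assoc]
      exact h

lemma C2 {n : ℕ} {t : TVD k V} (ht : t ∈ filtT k V (n + 1)) :
    PsiT k V t 1 - mkW k V t ∈ filtW k V n := by
  have := W2 k V (n+1) t ht 0 1 (one_mem_filtW0 k V)
  simpa using this


/-- **PBW for differential operators**: the natural surjection
`S(V ⊕ V^*) → gr D(V)` is an isomorphism: for every `n`, an element of filtration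
degree `n+1` of the tensor algebra maps into filtration degree `n` of `D(V)` if
and only if it does so in `S(V ⊕ V^*)`. -/
theorem pbw_weyl_algebra (n : ℕ) (x : TVD k V) (hx : x ∈ filtT k V (n + 1)) :
    (RingQuot.mkAlgHom k (weylRel k V)) x ∈ filtW k V n ↔
      (RingQuot.mkAlgHom k (symRelW k V)) x ∈ filtS k V n := by
  constructor
  · intro hW
    obtain ⟨y, hy, hxy⟩ := hW
    have hxy' : mkW k V y = mkW k V x := hxy
    have hPh : PhiT k V x 1 = PhiT k V y 1 := by
      have : PhiW k V (mkW k V x) = PhiW k V (mkW k V y) := by rw [hxy']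
      rw [PhiW_mkW, PhiW_mkW] at this
      rw [this]
    have h1 : PhiT k V x 1 - mkS k V x ∈ filtS k V n := C1 k V hx
    have h2 : PhiT k V y 1 - mkS k V y ∈ filtS k V n :=
      C1 k V (filtT_mono k V (Nat.le_succ n) hy)
    have h3 : mkS k V y ∈ filtS k V n := mkS_mem_filtS k V hy
    have heq : mkS k V x
        = mkS k V y + (PhiT k V y 1 - mkS k V y) - (PhiT k V x 1 - mkS k V x) := by
      rw [hPh]; abel
    show mkS k V x ∈ filtS k V n
    rw [heq]
    exact sub_mem (add_mem h3 h2) h1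
  · intro hS
    obtain ⟨y, hy, hxy⟩ := hS
    have hxy' : mkS k V y = mkS k V x := hxy
    have hPs : PsiT k V x 1 = PsiT k V y 1 := by
      have : PsiS k V (mkS k V x) = PsiS k V (mkS k V y) := by rw [hxy']
      rw [PsiS_mkS, PsiS_mkS] at this
      rw [this]
    have h1 : PsiT k V x 1 - mkW k V x ∈ filtW k V n := C2 k V hx
    have h2 : PsiT k V y 1 - mkW k V y ∈ filtW k V n :=
      C2 k V (filtT_mono k V (Nat.le_succ n) hy)
    have h3 : mkW k V y ∈ filtW k V n := mkW_mem_filtW k V hy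
    have heq : mkW k V x
        = mkW k V y + (PsiT k V y 1 - mkW k V y) - (PsiT k V x 1 - mkW k V x) := by
      rw [hPs]; abel
    show mkW k V x ∈ filtW k V n
    rw [heq]
    exact sub_mem (add_mem h3 h2) h1
end
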